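/- Let x ∈ ℤ with |x| ≥ 4 and A = (0 −1; 1 x) ∈ GL₂ℤ. Then the subgroup H_A of GL₂ℤ generated by A and −Id acts transitively on the set S_A = {v ∈ ℤ² : ℤv + ℤ(Av) = ℤ²}. -/

import Mathlib

open Matrix

abbrev GL2Z := GL (Fin 2) ℤ

/-- `S_A = {v ∈ ℤ² : ℤv + ℤ(Av) = ℤ²}`. -/
def SA (A : GL2Z) : Set (Fin 2 → ℤ) :=
  {v | Submodule.span ℤ {v, (A : Matrix (Fin 2) (Fin 2) ℤ).mulVec v} = ⊤}

/-- `H_A = ⟨A, -Id⟩ ≤ GL₂ℤ`. -/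
def HA (A : GL2Z) : Subgroup GL2Z := Subgroup.closure {A, -1}

lemma mulVec2 (p q r s a b : ℤ) : (!![p,q;r,s]).mulVec ![a,b] = ![p*a+q*b, r*a+s*b] := by
  funext i; fin_cases i <;> simp [Matrix.mulVec, dotProduct, Fin.sum_univ_two]

lemma span_det (v w : Fin 2 → ℤ) (h : Submodule.span ℤ {v, w} = ⊤) :
    v 0 * w 1 - v 1 * w 0 = 1 ∨ v 0 * w 1 - v 1 * w 0 = -1 := by
  have h0 : (Pi.single 0 1 : Fin 2 → ℤ) ∈ Submodule.span ℤ {v, w} := h ▸ Submodule.mem_top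
  have h1 : (Pi.single 1 1 : Fin 2 → ℤ) ∈ Submodule.span ℤ {v, w} := h ▸ Submodule.mem_top
  rw [Submodule.mem_span_pair] at h0 h1
  obtain ⟨p, q, hpq⟩ := h0
  obtain ⟨r, s, hrs⟩ := h1
  have e1 : p * v 0 + q * w 0 = 1 := by have := congrFun hpq 0; simpa using this
  have e2 : p * v 1 + q * w 1 = 0 := by have := congrFun hpq 1; simpa using this
  have e4 : r * v 1 + s * w 1 = 1 := by have := congrFun hrs 1; simpa using this
  have key : (p*s - q*r) * (v 0 * w 1 - v 1 * w 0) = 1 := by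
    linear_combination (r * v 1 + s * w 1) * e1 - (r * v 0 + s * w 0) * e2 + e4
  exact Int.isUnit_iff.mp (IsUnit.of_mul_eq_one (p*s - q*r) (by linear_combination key))

lemma step_lt (a b a' ε : ℤ) (hb : b ≠ 0) (hlt : |b| < |a|) (hε : ε = 1 ∨ ε = -1)
    (hprod : a * a' = b^2 - ε) : |a'| < |a| := by
  have h1 : |a| * |a'| = |b^2 - ε| := by rw [← abs_mul, hprod]
  have h2 : |b^2 - ε| ≤ b^2 + 1 := by
    rcases hε with rfl | rfl <;> rw [abs_le] <;> constructor <;> nlinarith [sq_nonneg b]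
  have h3 : 1 ≤ |b| := Int.one_le_abs hb
  have h4 : b^2 = |b|^2 := (sq_abs b).symm
  have h5 : a^2 = |a|^2 := (sq_abs a).symm
  have h6 : |a| * |a'| < |a| * |a| := by nlinarith
  exact lt_of_mul_lt_mul_left h6 (abs_nonneg a)

lemma eq_abs_contra (x a b ε : ℤ) (hx : 4 ≤ |x|) (ha : a ≠ 0) (hab : |a| = |b|)
    (hε : ε = 1 ∨ ε = -1) (hQ : a^2 + x*a*b + b^2 = ε) : False := by
  have h1 : |x * a * b| = |x| * (|a| * |b|) := by rw [abs_mul, abs_mul, mul_assoc]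
  have h3 : 1 ≤ |a| := Int.one_le_abs ha
  have hb2 : |a| * |b| = a^2 := by rw [← hab, ← sq_abs a, sq]
  have h2 : 4 * a^2 ≤ |x * a * b| := by rw [h1, hb2]; nlinarith [sq_nonneg a]
  have h4 : a^2 = b^2 := by rw [← sq_abs a, ← sq_abs b, hab]
  have h5 : a^2 ≥ 1 := by nlinarith [sq_abs a]
  rcases abs_cases (x*a*b) with ⟨h6, _⟩ | ⟨h6, _⟩ <;> rcases hε with rfl | rfl <;> nlinarith

lemma reduce (x : ℤ) (hx : 4 ≤ |x|) (A : GL2Z)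
    (hA : (A : Matrix (Fin 2) (Fin 2) ℤ) = !![0, -1; 1, x])
    (hAinv : ((A⁻¹ : GL2Z) : Matrix (Fin 2) (Fin 2) ℤ) = !![x,1;-1,0]) :
    ∀ n : ℕ, ∀ a b : ℤ, a.natAbs + b.natAbs = n →
      (a^2 + x*a*b + b^2 = 1 ∨ a^2 + x*a*b + b^2 = -1) →
      ∃ B ∈ HA A, (B : Matrix (Fin 2) (Fin 2) ℤ).mulVec ![a,b] = ![1,0] := by
  have hAmem : A ∈ HA A := Subgroup.subset_closure (Set.mem_insert _ _)
  have hNmem : (-1 : GL2Z) ∈ HA A := Subgroup.subset_closure (Set.mem_insert_of_mem _ rfl)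
  intro n
  induction n using Nat.strong_induction_on with
  | _ n IH =>
  intro a b hn hQ
  obtain ⟨ε, hε, hQ'⟩ : ∃ ε, (ε = 1 ∨ ε = -1) ∧ a^2 + x*a*b + b^2 = ε := by
    rcases hQ with h | h
    exacts [⟨1, Or.inl rfl, h⟩, ⟨-1, Or.inr rfl, h⟩]
  rcases eq_or_ne b 0 with rfl | hb
  · -- b = 0 : a = ±1
    have ha2 : a * a = 1 := by rcases hε with rfl | rfl <;> nlinarith [sq_nonneg a]
    rcases Int.isUnit_iff.mp (IsUnit.of_mul_eq_one (a := a) a ha2) with rfl | rfl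
    · exact ⟨1, one_mem _, by simp [Matrix.one_mulVec]⟩
    · refine ⟨-1, hNmem, ?_⟩
      have : ((-1 : GL2Z) : Matrix (Fin 2) (Fin 2) ℤ) = -1 := by simp
      rw [this, Matrix.neg_mulVec, Matrix.one_mulVec]
      funext i; fin_cases i <;> simp
  rcases eq_or_ne a 0 with rfl | ha
  · -- a = 0 : b = ±1
    have hb2 : b * b = 1 := by rcases hε with rfl | rfl <;> nlinarith [sq_nonneg b]
    rcases Int.isUnit_iff.mp (IsUnit.of_mul_eq_one (a := b) b hb2) with rfl | rfl
    · refine ⟨A⁻¹, inv_mem hAmem, ?_⟩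
      rw [hAinv, mulVec2]; norm_num
    · refine ⟨(-1) * A⁻¹, mul_mem hNmem (inv_mem hAmem), ?_⟩
      rw [Units.val_mul]
      have : ((-1 : GL2Z) : Matrix (Fin 2) (Fin 2) ℤ) = -1 := by simp
      rw [this, neg_one_mul, Matrix.neg_mulVec, hAinv, mulVec2]
      funext i; fin_cases i <;> simp
  rcases lt_trichotomy |a| |b| with hab | hab | hab
  · -- |a| < |b| : apply -A⁻¹, new vector (b', a) with b' = -x*a - b
    set b' : ℤ := -x*a - b with hb'def
    have hprod : b * b' = a^2 - ε := by rw [hb'def]; linear_combination -hQ'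
    have hlt' : |b'| < |b| := step_lt b a b' ε ha hab hε hprod
    have hsum : b'.natAbs + a.natAbs < n := by
      have h1 := hlt'
      rw [Int.abs_eq_natAbs, Int.abs_eq_natAbs] at h1
      have h2 : b'.natAbs < b.natAbs := by exact_mod_cast h1
      omega
    have hQ2 : b'^2 + x*b'*a + a^2 = ε := by rw [hb'def]; linear_combination hQ'
    obtain ⟨B', hB'mem, hB'⟩ := IH _ hsum b' a rfl
      (by rcases hε with rfl | rfl; exacts [Or.inl hQ2, Or.inr hQ2])
    refine ⟨B' * ((-1) * A⁻¹), mul_mem hB'mem (mul_mem hNmem (inv_mem hAmem)), ?_⟩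
    rw [Units.val_mul, ← Matrix.mulVec_mulVec, Units.val_mul]
    have h1 : ((-1 : GL2Z) : Matrix (Fin 2) (Fin 2) ℤ) = -1 := by simp
    rw [h1, neg_one_mul, Matrix.neg_mulVec, hAinv, mulVec2]
    have h2 : -(![x*a + 1*b, -1*a + 0*b] : Fin 2 → ℤ) = ![b', a] := by
      funext i; fin_cases i <;> simp [hb'def] <;> ring
    rw [h2, hB']
  · exact absurd hQ' (eq_abs_contra x a b ε hx ha hab hε)
  · -- |b| < |a| : apply -A, new vector (b, a') with a' = -a - x*b
    set a' : ℤ := -a - x*b with ha'def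
    have hprod : a * a' = b^2 - ε := by rw [ha'def]; linear_combination -hQ'
    have hlt' : |a'| < |a| := step_lt a b a' ε hb hab hε hprod
    have hsum : b.natAbs + a'.natAbs < n := by
      have h1 := hlt'
      rw [Int.abs_eq_natAbs, Int.abs_eq_natAbs] at h1
      have h2 : a'.natAbs < a.natAbs := by exact_mod_cast h1
      omega
    have hQ2 : b^2 + x*b*a' + a'^2 = ε := by rw [ha'def]; linear_combination hQ'
    obtain ⟨B', hB'mem, hB'⟩ := IH _ hsum b a' rfl
      (by rcases hε with rfl | rfl; exacts [Or.inl hQ2, Or.inr hQ2])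
    refine ⟨B' * ((-1) * A), mul_mem hB'mem (mul_mem hNmem hAmem), ?_⟩
    rw [Units.val_mul, ← Matrix.mulVec_mulVec, Units.val_mul]
    have h1 : ((-1 : GL2Z) : Matrix (Fin 2) (Fin 2) ℤ) = -1 := by simp
    rw [h1, neg_one_mul, Matrix.neg_mulVec, hA, mulVec2]
    have h2 : -(![0*a + (-1)*b, 1*a + x*b] : Fin 2 → ℤ) = ![b, a'] := by
      funext i; fin_cases i <;> simp [ha'def] <;> ring
    rw [h2, hB']

lemma SA_Q (x : ℤ) (A : GL2Z)
    (hA : (A : Matrix (Fin 2) (Fin 2) ℤ) = !![0, -1; 1, x])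
    (v : Fin 2 → ℤ) (hv : v ∈ SA A) :
    (v 0)^2 + x*(v 0)*(v 1) + (v 1)^2 = 1 ∨ (v 0)^2 + x*(v 0)*(v 1) + (v 1)^2 = -1 := by
  have h := span_det v ((A : Matrix (Fin 2) (Fin 2) ℤ).mulVec v) hv
  have h0 : ((A : Matrix (Fin 2) (Fin 2) ℤ).mulVec v) 0 = -(v 1) := by
    rw [hA]; simp [Matrix.mulVec, dotProduct, Fin.sum_univ_two]
  have h1 : ((A : Matrix (Fin 2) (Fin 2) ℤ).mulVec v) 1 = v 0 + x * v 1 := by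
    rw [hA]; simp [Matrix.mulVec, dotProduct, Fin.sum_univ_two]
  rw [h0, h1] at h
  rcases h with h | h
  · exact Or.inl (by linear_combination h)
  · exact Or.inr (by linear_combination h)

theorem case_abs_x_ge_four (x : ℤ) (hx : 4 ≤ |x|) (A : GL2Z)
    (hA : (A : Matrix (Fin 2) (Fin 2) ℤ) = !![0, -1; 1, x]) :
    ∀ v ∈ SA A, ∀ w ∈ SA A,
      ∃ B ∈ HA A, (B : Matrix (Fin 2) (Fin 2) ℤ).mulVec v = w := by
  have hAinv : ((A⁻¹ : GL2Z) : Matrix (Fin 2) (Fin 2) ℤ) = !![x,1;-1,0] := by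
    have h1 : (A : Matrix (Fin 2) (Fin 2) ℤ) * !![x,1;-1,0] = 1 := by
      rw [hA, Matrix.one_fin_two]; norm_num [Matrix.mul_fin_two]
    calc ((A⁻¹ : GL2Z) : Matrix (Fin 2) (Fin 2) ℤ)
        = ↑(A⁻¹) * ((A : Matrix (Fin 2) (Fin 2) ℤ) * !![x,1;-1,0]) := by rw [h1, mul_one]
      _ = (↑(A⁻¹) * (A : Matrix (Fin 2) (Fin 2) ℤ)) * !![x,1;-1,0] := by rw [mul_assoc]
      _ = !![x,1;-1,0] := by rw [Units.inv_mul, one_mul]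
  intro v hv w hw
  have hv2 : v = ![v 0, v 1] := by funext i; fin_cases i <;> rfl
  have hw2 : w = ![w 0, w 1] := by funext i; fin_cases i <;> rfl
  obtain ⟨B₁, hB₁mem, hB₁⟩ := reduce x hx A hA hAinv _ (v 0) (v 1) rfl (SA_Q x A hA v hv)
  obtain ⟨B₂, hB₂mem, hB₂⟩ := reduce x hx A hA hAinv _ (w 0) (w 1) rfl (SA_Q x A hA w hw)
  have hB₁' : (B₁ : Matrix (Fin 2) (Fin 2) ℤ).mulVec v = ![1, 0] := by
    have h : (B₁ : Matrix (Fin 2) (Fin 2) ℤ).mulVec v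
        = (B₁ : Matrix (Fin 2) (Fin 2) ℤ).mulVec ![v 0, v 1] := by congr 1
    rw [h, hB₁]
  have hB₂' : (B₂ : Matrix (Fin 2) (Fin 2) ℤ).mulVec w = ![1, 0] := by
    have h : (B₂ : Matrix (Fin 2) (Fin 2) ℤ).mulVec w
        = (B₂ : Matrix (Fin 2) (Fin 2) ℤ).mulVec ![w 0, w 1] := by congr 1
    rw [h, hB₂]
  refine ⟨B₂⁻¹ * B₁, mul_mem (inv_mem hB₂mem) hB₁mem, ?_⟩
  rw [Units.val_mul, ← Matrix.mulVec_mulVec, hB₁', ← hB₂',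
    Matrix.mulVec_mulVec, Units.inv_mul, Matrix.one_mulVec]
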